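/- Let D be a finite nonempty set, f : D → ℝ, ε : D → ℝ with ε ≥ 0, and suppose for every x̂ ∈ D there is a function B_{x̂} : D → ℝ with B_{x̂}(x) ≤ f(x) + ε(x) for all x ∈ D and B_{x̂}(x̂) = f(x̂) + ε(x̂). Let (x_r)_{r≥0} be any sequence in D such that x_0 minimizes f over D and, for every r ≥ 0, x_{r+1} minimizes L_r(x) := max(f(x), max_{0≤k≤r} B_{x_k}(x)) over D. Then there exists r ≤ |D| such that min_{x∈D} L_r(x) = min_{x∈D}(f(x) + ε(x)) and x_{r+1} attains this minimum of f + ε; that is, the Logic-Based Benders algorithm converges to the optimal solution of the original problem after at most |D| + 1 master iterations. (Theorem 1.) -/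

import Mathlib

/- Theorem 1: the Logic-Based Benders algorithm converges to the optimal
solution of the original problem after at most |D| + 1 master iterations. -/
theorem lbbd_finite_convergence
    {D : Type*} [Fintype D] [Nonempty D]
    (f ε : D → ℝ) (hε : ∀ x : D, 0 ≤ ε x)
    (B : D → D → ℝ)
    (hvalid : ∀ xhat x : D, B xhat x ≤ f x + ε x)
    (htight : ∀ xhat : D, B xhat xhat = f xhat + ε xhat)
    (x : ℕ → D)
    (L : ℕ → D → ℝ)
    (hL : ∀ (r : ℕ) (z : D),
      L r z = max (f z)
        ((Finset.range (r + 1)).sup' Finset.nonempty_range_add_one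
          (fun k => B (x k) z)))
    (h0 : ∀ y : D, f (x 0) ≤ f y)
    (hstep : ∀ (r : ℕ) (y : D), L r (x (r + 1)) ≤ L r y) :
    ∃ r : ℕ, r ≤ Fintype.card D ∧
      Finset.univ.inf' Finset.univ_nonempty (L r) =
        Finset.univ.inf' Finset.univ_nonempty (fun z : D => f z + ε z) ∧
      ∀ y : D, f (x (r + 1)) + ε (x (r + 1)) ≤ f y + ε y := by
  -- pigeonhole: among x 0, ..., x (card D) two are equal
  obtain ⟨i, hi, j, hj, hij, heq⟩ :
      ∃ i ∈ Finset.range (Fintype.card D + 1),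
        ∃ j ∈ Finset.range (Fintype.card D + 1), i ≠ j ∧ x i = x j := by
    apply Finset.exists_ne_map_eq_of_card_lt_of_maps_to (s := Finset.range (Fintype.card D + 1)) (t := (Finset.univ : Finset D)) (f := x)
    · simp only [Finset.card_range, Finset.card_univ]; omega
    · intro a _; exact Finset.mem_univ _
  -- wlog i < j
  obtain ⟨i, j, hi, hj, hlt, heq⟩ :
      ∃ i j : ℕ, i ∈ Finset.range (Fintype.card D + 1) ∧
        j ∈ Finset.range (Fintype.card D + 1) ∧ i < j ∧ x i = x j := by
    rcases hij.lt_or_gt with h | h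
    · exact ⟨i, j, hi, hj, h, heq⟩
    · exact ⟨j, i, hj, hi, h, heq.symm⟩
  refine ⟨j - 1, ?_, ?_, ?_⟩
  · have := Finset.mem_range.mp hj
    omega
  all_goals {
    have hj1 : j - 1 + 1 = j := by omega
    have heq' : x i = x (j - 1 + 1) := by rw [hj1]; exact heq
    have hub : ∀ y : D, L (j - 1) y ≤ f y + ε y := by
      intro y
      rw [hL]
      apply max_le
      · linarith [hε y]
      · exact Finset.sup'_le _ _ fun k _ => hvalid _ y
    have hlb : f (x (j - 1 + 1)) + ε (x (j - 1 + 1)) ≤ L (j - 1) (x (j - 1 + 1)) := by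
      rw [hL]
      refine le_max_of_le_right ?_
      have hmem : i ∈ Finset.range (j - 1 + 1) := by
        apply Finset.mem_range.mpr; omega
      calc f (x (j - 1 + 1)) + ε (x (j - 1 + 1))
          = B (x i) (x (j - 1 + 1)) := by rw [heq']; exact (htight _).symm
        _ ≤ _ := Finset.le_sup' (fun k => B (x k) (x (j - 1 + 1))) hmem
    have hmain : ∀ y : D, f (x (j - 1 + 1)) + ε (x (j - 1 + 1)) ≤ f y + ε y :=
      fun y => hlb.trans ((hstep (j - 1) y).trans (hub y))
    first
    | exact hmain
    | { apply le_antisymm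
        · apply Finset.le_inf'
          intro y _
          exact (Finset.inf'_le _ (Finset.mem_univ y)).trans (hub y)
        · apply Finset.le_inf'
          intro y _
          exact (Finset.inf'_le _ (Finset.mem_univ (x (j - 1 + 1)))).trans
            ((hmain _).trans ((hlb.trans (hstep (j - 1) y)) : _)) }
  }
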